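/- Let μ be a probability measure and A, B events with μ(A) > 0 and μ(B) > 0. Put x = μ[A|B] and y = μ[B|A]. Then μ[A ∩ B | A ∪ B] = 0 if x = 0 or y = 0, and μ[A ∩ B | A ∪ B] = x·y/(x + y − x·y) if x > 0 and y > 0. (The probability of the biconditional event A||B = (A∩B)|(A∪B) is the Hamacher t-norm, with parameter λ = 0, of the probabilities of the two conditionals A|B and B|A.) -/

import Mathlib

open MeasureTheory ProbabilityTheory

/-- The probability of the biconditional event `A||B = (A ∩ B)|(A ∪ B)` is the
Hamacher t-norm (parameter `λ = 0`) of `x = μ[A|B]` and `y = μ[B|A]`: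
it is `0` if `x = 0` or `y = 0`, and `x·y/(x + y − x·y)` if `x > 0` and `y > 0`. -/
theorem biconditional_hamacher {Ω : Type*} [MeasurableSpace Ω]
    (μ : Measure Ω) [IsProbabilityMeasure μ] (A B : Set Ω)
    (hA : MeasurableSet A) (hB : MeasurableSet B)
    (hApos : 0 < μ A) (hBpos : 0 < μ B)
    (x y : ℝ)
    (hx : x = ((ProbabilityTheory.cond μ B) A).toReal)
    (hy : y = ((ProbabilityTheory.cond μ A) B).toReal) :
    ((x = 0 ∨ y = 0) → ((ProbabilityTheory.cond μ (A ∪ B)) (A ∩ B)).toReal = 0) ∧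
    (0 < x → 0 < y →
      ((ProbabilityTheory.cond μ (A ∪ B)) (A ∩ B)).toReal = x * y / (x + y - x * y)) := by
  set ra := (μ A).toReal with hra
  set rb := (μ B).toReal with hrb
  set ri := (μ (A ∩ B)).toReal with hri
  set ru := (μ (A ∪ B)).toReal with hru
  have hraT : μ A ≠ ⊤ := measure_ne_top μ A
  have hrbT : μ B ≠ ⊤ := measure_ne_top μ B
  have hrapos : 0 < ra := ENNReal.toReal_pos hApos.ne' hraT
  have hrbpos : 0 < rb := ENNReal.toReal_pos hBpos.ne' hrbT
  have hcondU : ((ProbabilityTheory.cond μ (A ∪ B)) (A ∩ B)).toReal = ri / ru := by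
    rw [ProbabilityTheory.cond_apply (hA.union hB) μ,
      Set.inter_eq_self_of_subset_right
        (Set.inter_subset_left.trans Set.subset_union_left),
      ENNReal.toReal_mul, ENNReal.toReal_inv, inv_mul_eq_div]
  have hxval : x = ri / rb := by
    rw [hx, ProbabilityTheory.cond_apply hB μ, Set.inter_comm B A,
      ENNReal.toReal_mul, ENNReal.toReal_inv, inv_mul_eq_div]
  have hyval : y = ri / ra := by
    rw [hy, ProbabilityTheory.cond_apply hA μ,
      ENNReal.toReal_mul, ENNReal.toReal_inv, inv_mul_eq_div]
  have hsum : ru + ri = ra + rb := by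
    rw [hru, hri, hra, hrb, ← ENNReal.toReal_add (measure_ne_top μ _) (measure_ne_top μ _),
      ← ENNReal.toReal_add hraT hrbT, measure_union_add_inter A hB]
  have hrupos : 0 < ru :=
    ENNReal.toReal_pos (fun h => absurd ((measure_mono Set.subset_union_left).trans_eq h)
      (by simpa using hApos.not_ge)) (measure_ne_top μ _)
  constructor
  · rintro (h0 | h0)
    · have : ri = 0 := by
        have := hxval ▸ h0
        field_simp at this
        simpa using this
      rw [hcondU, this, zero_div]
    · have : ri = 0 := by
        have := hyval ▸ h0
        field_simp at this
        simpa using this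
      rw [hcondU, this, zero_div]
  · intro hxpos hypos
    have hripos : 0 < ri := by
      have : ri = rb * x := by rw [hxval]; field_simp
      rw [this]; positivity
    rw [hcondU, hxval, hyval]
    have hruval : ru = ra + rb - ri := by linarith
    have hden : ri / rb + ri / ra - ri / rb * (ri / ra) = ri * ru / (ra * rb) := by
      rw [hruval]; field_simp
    rw [hden, div_eq_div_iff hrupos.ne' (by positivity)]
    field_simp
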